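/- Let J = fromBlocks A B C D be a complex block matrix, where A is d₁×d₁, B is d₁×d₂, C is d₂×d₁, and D is d₂×d₂. Suppose λ ∈ ℂ is an eigenvalue of J with eigenvector (x₁, x₂) ∈ ℂ^{d₁} × ℂ^{d₂} satisfying x₁ ≠ 0 and x₂ ≠ 0, i.e. A·x₁ + B·x₂ = λ·x₁ and C·x₁ + D·x₂ = λ·x₂. Let v = x₁/‖x₁‖ and w = x₂/‖x₂‖, and set α = ⟨Av, v⟩, β = ⟨Bw, v⟩, γ = ⟨Cv, w⟩, δ = ⟨Dw, w⟩ (standard complex inner products). Then λ² − λ(α + δ) + αδ − βγ = 0; that is, λ lies in the quadratic numerical range of J. -/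

import Mathlib

open Matrix

theorem eigenvalue_mem_quadratic_numerical_range (d₁ d₂ : ℕ)
    (A : Matrix (Fin d₁) (Fin d₁) ℂ) (B : Matrix (Fin d₁) (Fin d₂) ℂ)
    (C : Matrix (Fin d₂) (Fin d₁) ℂ) (D : Matrix (Fin d₂) (Fin d₂) ℂ)
    (lam : ℂ)
    (x₁ : EuclideanSpace ℂ (Fin d₁)) (x₂ : EuclideanSpace ℂ (Fin d₂))
    (hx₁ : x₁ ≠ 0) (hx₂ : x₂ ≠ 0)
    (h₁ : A.mulVec x₁ + B.mulVec x₂ = lam • (x₁ : Fin d₁ → ℂ))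
    (h₂ : C.mulVec x₁ + D.mulVec x₂ = lam • (x₂ : Fin d₂ → ℂ))
    (v : EuclideanSpace ℂ (Fin d₁)) (w : EuclideanSpace ℂ (Fin d₂))
    (hv : v = ‖x₁‖⁻¹ • x₁) (hw : w = ‖x₂‖⁻¹ • x₂)
    (α β γ δ : ℂ)
    (hα : α = dotProduct (star (v : Fin d₁ → ℂ)) (A.mulVec v))
    (hβ : β = dotProduct (star (v : Fin d₁ → ℂ)) (B.mulVec w))
    (hγ : γ = dotProduct (star (w : Fin d₂ → ℂ)) (C.mulVec v))
    (hδ : δ = dotProduct (star (w : Fin d₂ → ℂ)) (D.mulVec w)) :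
    lam ^ 2 - lam * (α + δ) + α * δ - β * γ = 0 := by
  set p : ℂ := dotProduct (star (x₁ : Fin d₁ → ℂ)) (A.mulVec x₁) with hp
  set q : ℂ := dotProduct (star (x₁ : Fin d₁ → ℂ)) (B.mulVec x₂) with hq
  set r : ℂ := dotProduct (star (x₂ : Fin d₂ → ℂ)) (C.mulVec x₁) with hr
  set s : ℂ := dotProduct (star (x₂ : Fin d₂ → ℂ)) (D.mulVec x₂) with hs
  have hn₁ : dotProduct (star (x₁ : Fin d₁ → ℂ)) (x₁ : Fin d₁ → ℂ)
      = (‖x₁‖ : ℂ) ^ 2 := by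
    have h : (inner ℂ x₁ x₁ : ℂ) = ((‖x₁‖ : ℝ) : ℂ) ^ 2 := inner_self_eq_norm_sq_to_K x₁
    rw [PiLp.inner_apply] at h
    simpa [dotProduct, Complex.conj_mul'] using h
  have hn₂ : dotProduct (star (x₂ : Fin d₂ → ℂ)) (x₂ : Fin d₂ → ℂ)
      = (‖x₂‖ : ℂ) ^ 2 := by
    have h : (inner ℂ x₂ x₂ : ℂ) = ((‖x₂‖ : ℝ) : ℂ) ^ 2 := inner_self_eq_norm_sq_to_K x₂
    rw [PiLp.inner_apply] at h
    simpa [dotProduct, Complex.conj_mul'] using h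
  have e₁ : p + q = lam * (‖x₁‖ : ℂ) ^ 2 := by
    have h := congrArg (dotProduct (star (x₁ : Fin d₁ → ℂ))) h₁
    rw [dotProduct_add, ← hp, ← hq] at h
    rw [h, ← hn₁]
    simp [dotProduct, PiLp.smul_apply, smul_eq_mul, Finset.mul_sum, mul_left_comm]
  have e₂ : r + s = lam * (‖x₂‖ : ℂ) ^ 2 := by
    have h := congrArg (dotProduct (star (x₂ : Fin d₂ → ℂ))) h₂
    rw [dotProduct_add, ← hr, ← hs] at h
    rw [h, ← hn₂]
    simp [dotProduct, PiLp.smul_apply, smul_eq_mul, Finset.mul_sum, mul_left_comm]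
  have hc₁ : (‖x₁‖ : ℂ) ≠ 0 := by
    simpa using norm_ne_zero_iff.mpr hx₁
  have hc₂ : (‖x₂‖ : ℂ) ≠ 0 := by
    simpa using norm_ne_zero_iff.mpr hx₂
  have hvf : (v : Fin d₁ → ℂ) = (‖x₁‖ : ℂ)⁻¹ • (x₁ : Fin d₁ → ℂ) := by
    rw [hv]; ext i; simp [Complex.real_smul]
  have hwf : (w : Fin d₂ → ℂ) = (‖x₂‖ : ℂ)⁻¹ • (x₂ : Fin d₂ → ℂ) := by
    rw [hw]; ext i; simp [Complex.real_smul]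
  have hα' : α = (‖x₁‖ : ℂ)⁻¹ * (‖x₁‖ : ℂ)⁻¹ * p := by
    rw [hα, hvf, Matrix.mulVec_smul]
    simp only [star_smul, smul_dotProduct, dotProduct_smul, smul_eq_mul,
      star_inv₀, Complex.star_def, Complex.conj_ofReal, ← hp]
    ring
  have hβ' : β = (‖x₁‖ : ℂ)⁻¹ * (‖x₂‖ : ℂ)⁻¹ * q := by
    rw [hβ, hvf, hwf, Matrix.mulVec_smul]
    simp only [star_smul, smul_dotProduct, dotProduct_smul, smul_eq_mul,
      star_inv₀, Complex.star_def, Complex.conj_ofReal, ← hq]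
    ring
  have hγ' : γ = (‖x₂‖ : ℂ)⁻¹ * (‖x₁‖ : ℂ)⁻¹ * r := by
    rw [hγ, hvf, hwf, Matrix.mulVec_smul]
    simp only [star_smul, smul_dotProduct, dotProduct_smul, smul_eq_mul,
      star_inv₀, Complex.star_def, Complex.conj_ofReal, ← hr]
    ring
  have hδ' : δ = (‖x₂‖ : ℂ)⁻¹ * (‖x₂‖ : ℂ)⁻¹ * s := by
    rw [hδ, hwf, Matrix.mulVec_smul]
    simp only [star_smul, smul_dotProduct, dotProduct_smul, smul_eq_mul,
      star_inv₀, Complex.star_def, Complex.conj_ofReal, ← hs]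
    ring
  have L₁ : lam = (‖x₁‖ : ℂ)⁻¹ * (‖x₁‖ : ℂ)⁻¹ * (p + q) := by
    field_simp
    linear_combination -e₁
  have L₂ : lam = (‖x₂‖ : ℂ)⁻¹ * (‖x₂‖ : ℂ)⁻¹ * (r + s) := by
    field_simp
    linear_combination -e₂
  rw [hα', hβ', hγ', hδ']
  linear_combination (lam - (‖x₂‖ : ℂ)⁻¹ * (‖x₂‖ : ℂ)⁻¹ * s) * L₁ +
    (‖x₁‖ : ℂ)⁻¹ * (‖x₁‖ : ℂ)⁻¹ * q * L₂
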